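/- With the intertwiner Φ = x_n t_{s_{n−1}} t_{s_{n−2}} ⋯ t_{s_1} ∈ H: z_i Φ = Φ z_{i+1} for 1 ≤ i ≤ n−1; z_n Φ = Φ (z_1 + κ − Σ_{j=0}^{r−1} (d_{j−1} − d_{j−2}) ε_{1j}); t_{ζ_i} Φ = Φ t_{ζ_{i+1}} for 1 ≤ i ≤ n−1; and t_{ζ_n} Φ = ζ^{−1} Φ t_{ζ_1}. -/

import Mathlib

/-- `ζ = e^{2πi/r}`. -/
noncomputable def zeta (r : ℕ) : ℂ := Complex.exp (2 * Real.pi * Complex.I / r)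

theorem zeta_pow_self {r : ℕ} (hr : 0 < r) : zeta r ^ r = 1 := by
  rw [zeta, ← Complex.exp_nat_mul, mul_comm, div_mul_cancel₀, Complex.exp_two_pi_mul_I]
  exact_mod_cast Nat.cast_ne_zero.mpr hr.ne'

theorem zeta_zpow_root (r : ℕ) (l : ℤ) : (zeta r ^ l) ^ r = 1 := by
  rcases Nat.eq_zero_or_pos r with h | h
  · rw [h, pow_zero]
  · rw [← zpow_natCast, ← zpow_mul, mul_comm, zpow_mul, zpow_natCast,
      zeta_pow_self h, one_zpow]

/-- The elements of `G(r,1,n)`: `n × n` monomial matrices whose nonzero entries are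
`r`-th roots of unity. -/
def IsGMonomial (r n : ℕ) (w : Matrix (Fin n) (Fin n) ℂ) : Prop :=
  ∃ (σ : Equiv.Perm (Fin n)) (a : Fin n → ℂ), (∀ i, a i ^ r = 1) ∧
    ∀ i j, w i j = if i = σ j then a j else 0

theorem IsGMonomial.mul {r n : ℕ} {w v : Matrix (Fin n) (Fin n) ℂ}
    (hw : IsGMonomial r n w) (hv : IsGMonomial r n v) : IsGMonomial r n (w * v) := by
  obtain ⟨σ, a, ha, hwe⟩ := hw
  obtain ⟨τ, b, hb, hve⟩ := hv
  refine ⟨σ * τ, fun j => a (τ j) * b j, fun j => by rw [mul_pow, ha, hb, one_mul], ?_⟩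
  intro i j
  rw [Matrix.mul_apply, Finset.sum_eq_single (τ j)]
  · rw [hwe, hve, if_pos rfl, Equiv.Perm.mul_apply]
    simp [ite_mul]
  · intro k _ hk
    rw [hve, if_neg hk, mul_zero]
  · simp

/-- The diagonal matrix `ζ_i^l`, with `ζ^l` in position `i` and `1`'s elsewhere. -/
noncomputable def zmat (r n : ℕ) (i : Fin n) (l : ℤ) : Matrix (Fin n) (Fin n) ℂ :=
  Matrix.diagonal (fun a => if a = i then zeta r ^ l else 1)

theorem isGMonomial_zmat (r : ℕ) {n : ℕ} (i : Fin n) (l : ℤ) :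
    IsGMonomial r n (zmat r n i l) := by
  refine ⟨1, fun b => if b = i then zeta r ^ l else 1, ?_, ?_⟩
  · intro b
    dsimp only
    split
    · exact zeta_zpow_root r l
    · exact one_pow r
  · intro a b
    rcases eq_or_ne a b with h | h
    · subst h; simp [zmat, Matrix.diagonal_apply]
    · simp [zmat, Matrix.diagonal_apply_ne _ h, Equiv.Perm.one_apply, h]

/-- The transposition (permutation) matrix `s_{ij}` interchanging coordinates `i` and `j`. -/
def smat {n : ℕ} (i j : Fin n) : Matrix (Fin n) (Fin n) ℂ :=
  Matrix.of fun a b => if a = Equiv.swap i j b then 1 else 0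

theorem isGMonomial_smat (r : ℕ) {n : ℕ} (i j : Fin n) : IsGMonomial r n (smat i j) :=
  ⟨Equiv.swap i j, fun _ => 1, fun _ => one_pow r, fun a b => by simp [smat]⟩

/-- The group `G(r,1,n)` of monomial matrices, as a subtype of matrices. -/
def GMon (r n : ℕ) : Type := {w : Matrix (Fin n) (Fin n) ℂ // IsGMonomial r n w}

/-- `ζ_i^l` as an element of `G(r,1,n)`. -/
noncomputable def zetaW (r : ℕ) {n : ℕ} (i : Fin n) (l : ℤ) : GMon r n :=
  ⟨zmat r n i l, isGMonomial_zmat r i l⟩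

/-- `s_{ij}` as an element of `G(r,1,n)`. -/
noncomputable def sW (r : ℕ) {n : ℕ} (i j : Fin n) : GMon r n :=
  ⟨smat i j, isGMonomial_smat r i j⟩

/-- The reflection `ζ_i^l s_{ij} ζ_i^{-l}` as an element of `G(r,1,n)`. -/
noncomputable def reflW (r : ℕ) {n : ℕ} (i j : Fin n) (l : ℤ) : GMon r n :=
  ⟨zmat r n i l * smat i j * zmat r n i (-l),
    ((isGMonomial_zmat r i l).mul (isGMonomial_smat r i j)).mul (isGMonomial_zmat r i (-l))⟩

/-- The element `ζ_i^l ζ_j^{-l}` of `G(r,1,n)`. -/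
noncomputable def pairW (r : ℕ) {n : ℕ} (i j : Fin n) (l : ℤ) : GMon r n :=
  ⟨zmat r n i l * zmat r n j (-l),
    (isGMonomial_zmat r i l).mul (isGMonomial_zmat r j (-l))⟩

/-- Generators of the rational Cherednik algebra of `G(r,1,n)`:
`x_1, …, x_n`, `y_1, …, y_n` and `t_w` for `w ∈ G(r,1,n)`. -/
inductive CGen (r n : ℕ) where
  | X (i : Fin n) : CGen r n
  | Y (i : Fin n) : CGen r n
  | T (w : GMon r n) : CGen r n

/-- The defining relations of the rational Cherednik algebra of `G(r,1,n)` with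
parameters `κ, c₀, c_1, …, c_{r-1}`. -/
inductive CRel (r n : ℕ) (κ c₀ : ℂ) (c : ℕ → ℂ) :
    FreeAlgebra ℂ (CGen r n) → FreeAlgebra ℂ (CGen r n) → Prop
  | t_mul (u w v : GMon r n) : u.1 = w.1 * v.1 → CRel r n κ c₀ c
      (FreeAlgebra.ι ℂ (.T u)) (FreeAlgebra.ι ℂ (.T w) * FreeAlgebra.ι ℂ (.T v))
  | t_one (u : GMon r n) : u.1 = 1 → CRel r n κ c₀ c (FreeAlgebra.ι ℂ (.T u)) 1
  | t_x (w : GMon r n) (i : Fin n) : CRel r n κ c₀ c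
      (FreeAlgebra.ι ℂ (.T w) * FreeAlgebra.ι ℂ (.X i))
      (∑ j, (w.1⁻¹ i j) • (FreeAlgebra.ι ℂ (.X j) * FreeAlgebra.ι ℂ (.T w)))
  | t_y (w : GMon r n) (i : Fin n) : CRel r n κ c₀ c
      (FreeAlgebra.ι ℂ (.T w) * FreeAlgebra.ι ℂ (.Y i))
      (∑ j, (w.1 j i) • (FreeAlgebra.ι ℂ (.Y j) * FreeAlgebra.ι ℂ (.T w)))
  | xx (i j : Fin n) : CRel r n κ c₀ c
      (FreeAlgebra.ι ℂ (.X i) * FreeAlgebra.ι ℂ (.X j))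
      (FreeAlgebra.ι ℂ (.X j) * FreeAlgebra.ι ℂ (.X i))
  | yy (i j : Fin n) : CRel r n κ c₀ c
      (FreeAlgebra.ι ℂ (.Y i) * FreeAlgebra.ι ℂ (.Y j))
      (FreeAlgebra.ι ℂ (.Y j) * FreeAlgebra.ι ℂ (.Y i))
  | yx_ne (i j : Fin n) : i ≠ j → CRel r n κ c₀ c
      (FreeAlgebra.ι ℂ (.Y i) * FreeAlgebra.ι ℂ (.X j))
      (FreeAlgebra.ι ℂ (.X j) * FreeAlgebra.ι ℂ (.Y i) +
        c₀ • ∑ l ∈ Finset.range r,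
          (zeta r ^ (-(l : ℤ))) • FreeAlgebra.ι ℂ (.T (reflW r i j (l : ℤ))))
  | yx_eq (i : Fin n) : CRel r n κ c₀ c
      (FreeAlgebra.ι ℂ (.Y i) * FreeAlgebra.ι ℂ (.X i))
      (FreeAlgebra.ι ℂ (.X i) * FreeAlgebra.ι ℂ (.Y i) + κ • (1 : FreeAlgebra ℂ (CGen r n))
        - ∑ l ∈ Finset.Ico 1 r,
            (c l * (1 - zeta r ^ (-(l : ℤ)))) • FreeAlgebra.ι ℂ (.T (zetaW r i (l : ℤ)))
        - c₀ • ∑ j ∈ Finset.univ.erase i, ∑ l ∈ Finset.range r,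
            FreeAlgebra.ι ℂ (.T (reflW r i j (l : ℤ))))

variable (r n : ℕ) (κ c₀ : ℂ) (c : ℕ → ℂ)

/-- The image of `x_i` in the rational Cherednik algebra of `G(r,1,n)`. -/
noncomputable def cX (i : Fin n) : RingQuot (CRel r n κ c₀ c) :=
  RingQuot.mkAlgHom ℂ (CRel r n κ c₀ c) (FreeAlgebra.ι ℂ (.X i))

/-- The image of `y_i` in the rational Cherednik algebra of `G(r,1,n)`. -/
noncomputable def cY (i : Fin n) : RingQuot (CRel r n κ c₀ c) :=
  RingQuot.mkAlgHom ℂ (CRel r n κ c₀ c) (FreeAlgebra.ι ℂ (.Y i))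

/-- The image of `t_w` in the rational Cherednik algebra of `G(r,1,n)`. -/
noncomputable def cT (w : GMon r n) : RingQuot (CRel r n κ c₀ c) :=
  RingQuot.mkAlgHom ℂ (CRel r n κ c₀ c) (FreeAlgebra.ι ℂ (.T w))

/-- `φ_i = Σ_{j<i} Σ_{l=0}^{r-1} t_{ζ_i^l s_{ij} ζ_i^{-l}}`. -/
noncomputable def cPhi (i : Fin n) : RingQuot (CRel r n κ c₀ c) :=
  ∑ j ∈ Finset.univ.filter (fun j : Fin n => j < i), ∑ l ∈ Finset.range r,
    cT r n κ c₀ c (reflW r i j (l : ℤ))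

/-- The Dunkl–Opdam–Cherednik element `z_i = y_i x_i + c₀ φ_i`. -/
noncomputable def cz (i : Fin n) : RingQuot (CRel r n κ c₀ c) :=
  cY r n κ c₀ c i * cX r n κ c₀ c i + c₀ • cPhi r n κ c₀ c i

/-- `π_i = Σ_{l=0}^{r-1} t_{ζ_i^l ζ_{i+1}^{-l}}` (here with the two indices `i`, `i+1`
passed separately). -/
noncomputable def cPi (i j : Fin n) : RingQuot (CRel r n κ c₀ c) :=
  ∑ l ∈ Finset.range r, cT r n κ c₀ c (pairW r i j (l : ℤ))

/-- The idempotent `ε_{ij} = (1/r) Σ_{l=0}^{r-1} ζ^{-lj} t_{ζ_i^l}`. -/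
noncomputable def cEps (i : Fin n) (j : ℤ) : RingQuot (CRel r n κ c₀ c) :=
  (r : ℂ)⁻¹ • ∑ l ∈ Finset.range r, (zeta r ^ (-(l : ℤ) * j)) • cT r n κ c₀ c (zetaW r i (l : ℤ))

/-- The reparametrised constants `d_j = Σ_{l=1}^{r-1} ζ^{lj} c_l`. -/
noncomputable def dpar (j : ℤ) : ℂ := ∑ l ∈ Finset.Ico 1 r, zeta r ^ ((l : ℤ) * j) * c l

variable (m : ℕ)

/-- The intertwiner `Φ = x_n t_{s_{n-1}} t_{s_{n-2}} ⋯ t_{s_1}` (with `n = m + 2`). -/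
noncomputable def cPhiOp : RingQuot (CRel r (m + 2) κ c₀ c) :=
  cX r (m + 2) κ c₀ c (Fin.last (m + 1)) *
    ((List.ofFn fun k : Fin (m + 1) =>
      cT r (m + 2) κ c₀ c (sW r k.castSucc k.succ)).reverse).prod

/-! ### Auxiliary machinery -/

theorem zeta_ne_zero (r : ℕ) : zeta r ≠ 0 := Complex.exp_ne_zero _

theorem zeta_zpow_ne_zero (r : ℕ) (l : ℤ) : zeta r ^ l ≠ 0 :=
  zpow_ne_zero l (zeta_ne_zero r)

theorem zeta_zpow_add (r : ℕ) (a b : ℤ) : zeta r ^ (a + b) = zeta r ^ a * zeta r ^ b :=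
  zpow_add₀ (zeta_ne_zero r) a b

theorem zeta_zpow_neg_mul (r : ℕ) (l : ℤ) : zeta r ^ l * zeta r ^ (-l) = 1 := by
  rw [← zeta_zpow_add]; simp

theorem zeta_zpow_inv (r : ℕ) (l : ℤ) : (zeta r ^ l)⁻¹ = zeta r ^ (-l) := by
  rw [← zpow_neg]

/-- A monomial matrix constructor. -/
noncomputable def mono {n : ℕ} (σ : Equiv.Perm (Fin n)) (a : Fin n → ℂ) :
    Matrix (Fin n) (Fin n) ℂ :=
  Matrix.of fun i j => if i = σ j then a j else 0

theorem mono_mul {n : ℕ} (σ τ : Equiv.Perm (Fin n)) (a b : Fin n → ℂ) :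
    mono σ a * mono τ b = mono (σ * τ) (fun j => a (τ j) * b j) := by
  ext i j
  rw [Matrix.mul_apply, Finset.sum_eq_single (τ j)]
  · simp only [mono, Matrix.of_apply, Equiv.Perm.mul_apply, if_pos rfl]
    simp [ite_mul]
    congr
  · intro k _ hk
    simp [mono, if_neg hk]
  · simp

theorem mono_one {n : ℕ} : mono (n := n) 1 (fun _ => 1) = 1 := by
  ext i j
  simp [mono, Matrix.one_apply, eq_comm]
  congr

theorem mono_ext_one {n : ℕ} (a : Fin n → ℂ) (ha : ∀ i, a i = 1) :
    mono (n := n) 1 a = 1 := by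
  have : a = fun _ => 1 := funext ha
  rw [this, mono_one]

theorem mono_inv_left {n : ℕ} (σ : Equiv.Perm (Fin n)) (a : Fin n → ℂ)
    (ha : ∀ i, a i ≠ 0) :
    mono σ⁻¹ (fun j => (a (σ⁻¹ j))⁻¹) * mono σ a = 1 := by
  rw [mono_mul, inv_mul_cancel]
  exact mono_ext_one _ fun i => by
    simp only [Equiv.Perm.inv_def, Equiv.symm_apply_apply]
    exact inv_mul_cancel₀ (ha i)

theorem mono_inv_eq {n : ℕ} (σ : Equiv.Perm (Fin n)) (a : Fin n → ℂ)
    (ha : ∀ i, a i ≠ 0) :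
    (mono σ a)⁻¹ = mono σ⁻¹ (fun j => (a (σ⁻¹ j))⁻¹) :=
  Matrix.inv_eq_left_inv (mono_inv_left σ a ha)

theorem zmat_eq_mono (r n : ℕ) (i : Fin n) (l : ℤ) :
    zmat r n i l = mono 1 (fun b => if b = i then zeta r ^ l else 1) := by
  ext a b
  rcases eq_or_ne a b with h | h
  · subst h; simp [zmat, mono, Matrix.diagonal_apply_eq]
  · simp [zmat, mono, Matrix.diagonal_apply_ne _ h, Equiv.Perm.one_apply, h]

theorem smat_eq_mono {n : ℕ} (i j : Fin n) : smat i j = mono (Equiv.swap i j) 1 := rfl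

/-- The scaling function of the reflection `ζ_i^l s_{ij} ζ_i^{-l}`. -/
noncomputable def aRefl (r : ℕ) {n : ℕ} (i j : Fin n) (l : ℤ) : Fin n → ℂ :=
  fun b => if b = i then zeta r ^ (-l) else if b = j then zeta r ^ l else 1

theorem reflW_eq_mono (r : ℕ) {n : ℕ} {i j : Fin n} (hij : i ≠ j) (l : ℤ) :
    (reflW r i j l).1 = mono (Equiv.swap i j) (aRefl r i j l) := by
  show zmat r n i l * smat i j * zmat r n i (-l) = _
  rw [zmat_eq_mono, zmat_eq_mono, smat_eq_mono, mono_mul, mono_mul]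
  have hperm : (1 : Equiv.Perm (Fin n)) * Equiv.swap i j * 1 = Equiv.swap i j := by group
  rw [hperm]
  refine congrArg _ (funext fun b => ?_)
  rcases eq_or_ne b i with h | h
  · subst h
    simp [aRefl, Equiv.swap_apply_left, hij.symm, Equiv.Perm.one_apply, zpow_neg,
      mul_inv_cancel₀ (zeta_zpow_ne_zero r l)]
  · rcases eq_or_ne b j with h2 | h2
    · subst h2
      simp [aRefl, Equiv.swap_apply_right, Equiv.Perm.one_apply, h, h.symm, zpow_neg]
    · simp [aRefl, Equiv.swap_apply_of_ne_of_ne h h2, Equiv.Perm.one_apply, h, h2, zpow_neg]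

theorem zetaW_eq_mono (r : ℕ) {n : ℕ} (i : Fin n) (l : ℤ) :
    (zetaW r i l).1 = mono 1 (fun b => if b = i then zeta r ^ l else 1) :=
  zmat_eq_mono r n i l

theorem aRefl_ne_zero (r : ℕ) {n : ℕ} (i j : Fin n) (l : ℤ) (b : Fin n) :
    aRefl r i j l b ≠ 0 := by
  unfold aRefl
  split
  · exact zeta_zpow_ne_zero r _
  · split
    · exact zeta_zpow_ne_zero r _
    · exact one_ne_zero

theorem aZ_ne_zero (r : ℕ) {n : ℕ} (i : Fin n) (l : ℤ) (b : Fin n) :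
    (if b = i then zeta r ^ l else 1) ≠ 0 := by
  split
  · exact zeta_zpow_ne_zero r _
  · exact one_ne_zero


theorem isGMonomial_one (r n : ℕ) : IsGMonomial r n 1 := by
  refine ⟨1, fun _ => 1, fun _ => one_pow r, fun i j => ?_⟩
  simp [Matrix.one_apply, Equiv.Perm.one_apply]
  congr

noncomputable instance (r n : ℕ) : Monoid (GMon r n) where
  mul w v := ⟨w.1 * v.1, w.2.mul v.2⟩
  one := ⟨1, isGMonomial_one r n⟩
  mul_assoc a b c := Subtype.ext (mul_assoc a.1 b.1 c.1)
  one_mul a := Subtype.ext (one_mul a.1)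
  mul_one a := Subtype.ext (mul_one a.1)

theorem GMon.mul_val {r n : ℕ} (w v : GMon r n) : (w * v).1 = w.1 * v.1 := rfl

theorem GMon.one_val (r n : ℕ) : (1 : GMon r n).1 = 1 := rfl

theorem cT_one : cT r n κ c₀ c 1 = 1 := by
  have h := RingQuot.mkAlgHom_rel ℂ (CRel.t_one (κ := κ) (c₀ := c₀) (c := c)
    (1 : GMon r n) rfl)
  rw [cT, h, map_one]

theorem cT_eq (w v : GMon r n) (h : w.1 = v.1) :
    cT r n κ c₀ c w = cT r n κ c₀ c v := by
  have h1 : w.1 = v.1 * (1 : GMon r n).1 := by rw [h, GMon.one_val, mul_one]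
  have h2 := RingQuot.mkAlgHom_rel ℂ (CRel.t_mul (κ := κ) (c₀ := c₀) (c := c) w v 1 h1)
  rw [cT, h2, map_mul, ← cT, ← cT, cT_one, mul_one]

theorem cT_mul (w v : GMon r n) :
    cT r n κ c₀ c (w * v) = cT r n κ c₀ c w * cT r n κ c₀ c v := by
  have h2 := RingQuot.mkAlgHom_rel ℂ (CRel.t_mul (κ := κ) (c₀ := c₀) (c := c)
    (w * v) w v rfl)
  rw [cT, h2, map_mul, ← cT, ← cT]

theorem cT_list_prod (L : List (GMon r n)) :
    (L.map (cT r n κ c₀ c)).prod = cT r n κ c₀ c L.prod := by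
  induction L with
  | nil => simp [cT_one]
  | cons a L ih => simp [List.prod_cons, ih, cT_mul]

theorem cT_mul_cX (w : GMon r n) (σ : Equiv.Perm (Fin n)) (a : Fin n → ℂ)
    (hw : w.1 = mono σ a) (ha : ∀ b, a b ≠ 0) (i : Fin n) :
    cT r n κ c₀ c w * cX r n κ c₀ c i =
      (a i)⁻¹ • (cX r n κ c₀ c (σ i) * cT r n κ c₀ c w) := by
  have h := RingQuot.mkAlgHom_rel ℂ (CRel.t_x (κ := κ) (c₀ := c₀) (c := c) w i)
  rw [show cT r n κ c₀ c w * cX r n κ c₀ c i =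
      RingQuot.mkAlgHom ℂ (CRel r n κ c₀ c)
        (FreeAlgebra.ι ℂ (.T w) * FreeAlgebra.ι ℂ (.X i)) by rw [map_mul]; rfl, h,
    map_sum]
  have hinv : w.1⁻¹ = mono σ⁻¹ (fun j => (a (σ⁻¹ j))⁻¹) := by
    rw [hw]; exact mono_inv_eq σ a ha
  rw [Finset.sum_eq_single (σ i)]
  · rw [map_smul, map_mul, hinv]
    have : mono σ⁻¹ (fun j => (a (σ⁻¹ j))⁻¹) i (σ i) = (a i)⁻¹ := by
      simp [mono]
    rw [this]; rfl
  · intro j _ hj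
    rw [hinv]
    have : mono σ⁻¹ (fun j => (a (σ⁻¹ j))⁻¹) i j = 0 := by
      have : ¬ i = σ⁻¹ j := fun hh => hj (by rw [hh, Equiv.Perm.inv_def, Equiv.apply_symm_apply])
      simp only [mono, Matrix.of_apply]
      exact if_neg this
    rw [this, zero_smul, map_zero]
  · intro hmem
    exact absurd (Finset.mem_univ (σ i)) hmem

theorem cT_mul_cY (w : GMon r n) (σ : Equiv.Perm (Fin n)) (a : Fin n → ℂ)
    (hw : w.1 = mono σ a) (i : Fin n) :
    cT r n κ c₀ c w * cY r n κ c₀ c i =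
      a i • (cY r n κ c₀ c (σ i) * cT r n κ c₀ c w) := by
  have h := RingQuot.mkAlgHom_rel ℂ (CRel.t_y (κ := κ) (c₀ := c₀) (c := c) w i)
  rw [show cT r n κ c₀ c w * cY r n κ c₀ c i =
      RingQuot.mkAlgHom ℂ (CRel r n κ c₀ c)
        (FreeAlgebra.ι ℂ (.T w) * FreeAlgebra.ι ℂ (.Y i)) by rw [map_mul]; rfl, h,
    map_sum]
  rw [Finset.sum_eq_single (σ i)]
  · rw [map_smul, map_mul, hw]
    have : mono σ a (σ i) i = a i := by simp [mono]
    rw [this]; rfl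
  · intro j _ hj
    rw [hw]
    have : mono σ a j i = 0 := by simp [mono, hj]
    rw [this, zero_smul, map_zero]
  · intro hmem
    exact absurd (Finset.mem_univ (σ i)) hmem

theorem cX_comm (i j : Fin n) :
    cX r n κ c₀ c i * cX r n κ c₀ c j = cX r n κ c₀ c j * cX r n κ c₀ c i := by
  have h := RingQuot.mkAlgHom_rel ℂ (CRel.xx (r := r) (κ := κ) (c₀ := c₀) (c := c) i j)
  simpa only [map_mul, cX] using h

theorem cY_cX_ne {i j : Fin n} (hij : i ≠ j) :
    cY r n κ c₀ c i * cX r n κ c₀ c j = cX r n κ c₀ c j * cY r n κ c₀ c i +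
      c₀ • ∑ l ∈ Finset.range r,
        (zeta r ^ (-(l : ℤ))) • cT r n κ c₀ c (reflW r i j (l : ℤ)) := by
  have h := RingQuot.mkAlgHom_rel ℂ (CRel.yx_ne (r := r) (κ := κ) (c₀ := c₀) (c := c) i j hij)
  simpa only [map_mul, map_add, map_smul, map_sum, cX, cY, cT] using h

theorem cY_cX_eq (i : Fin n) :
    cY r n κ c₀ c i * cX r n κ c₀ c i = cX r n κ c₀ c i * cY r n κ c₀ c i +
      κ • (1 : RingQuot (CRel r n κ c₀ c))
      - ∑ l ∈ Finset.Ico 1 r,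
          (c l * (1 - zeta r ^ (-(l : ℤ)))) • cT r n κ c₀ c (zetaW r i (l : ℤ))
      - c₀ • ∑ j ∈ Finset.univ.erase i, ∑ l ∈ Finset.range r,
          cT r n κ c₀ c (reflW r i j (l : ℤ)) := by
  have h := RingQuot.mkAlgHom_rel ℂ (CRel.yx_eq (r := r) (κ := κ) (c₀ := c₀) (c := c) i)
  simpa only [map_mul, map_add, map_sub, map_smul, map_sum, map_one, cX, cY, cT] using h


theorem listProdApply {α : Type*} (L : List (Equiv.Perm α)) (x : α)
    (h : ∀ σ ∈ L, σ x = x) : L.prod x = x := by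
  induction L with
  | nil => simp
  | cons a l ih =>
    rw [List.prod_cons, Equiv.Perm.mul_apply, ih (fun σ hσ => h σ (List.mem_cons_of_mem a hσ)),
      h a List.mem_cons_self]

theorem listProdReverseInvol {G : Type*} [Group G] (L : List G)
    (h : ∀ g ∈ L, g * g = 1) : L.reverse.prod = L.prod⁻¹ := by
  induction L with
  | nil => simp
  | cons a l ih =>
    simp only [List.reverse_cons, List.prod_append, List.prod_cons, List.prod_nil, mul_one,
      ih (fun g hg => h g (List.mem_cons_of_mem a hg)), mul_inv_rev,
      inv_eq_of_mul_eq_one_left (h a List.mem_cons_self)]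

/-- The list of adjacent transpositions `s_0, s_1, …, s_m` in `Perm (Fin (m+2))`. -/
def swapList (m : ℕ) : List (Equiv.Perm (Fin (m + 2))) :=
  List.ofFn fun k : Fin (m + 1) => Equiv.swap k.castSucc k.succ

/-- The cycle `q = s_0 s_1 ⋯ s_m`, mapping `j ↦ j+1` cyclically. -/
def qcyc (m : ℕ) : Equiv.Perm (Fin (m + 2)) := (swapList m).prod

/-- The cycle `p = s_m s_{m-1} ⋯ s_0 = q⁻¹`, mapping `j ↦ j-1` cyclically. -/
def pcyc (m : ℕ) : Equiv.Perm (Fin (m + 2)) := (swapList m).reverse.prod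

theorem swapList_getElem (m : ℕ) (i : ℕ) (h : i < (swapList m).length) :
    (swapList m)[i] = Equiv.swap (Fin.castSucc ⟨i, by simpa [swapList] using h⟩)
      (Fin.succ ⟨i, by simpa [swapList] using h⟩) := by
  simp only [swapList, List.getElem_ofFn]

theorem swapList_length (m : ℕ) : (swapList m).length = m + 1 := by simp [swapList]

theorem qcyc_castSucc {m : ℕ} (k : Fin (m + 1)) : qcyc m k.castSucc = k.succ := by
  have hk : (k : ℕ) < (swapList m).length := by rw [swapList_length]; exact k.2
  have hsplit : swapList m = (swapList m).take k ++ (swapList m).drop k :=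
    (List.take_append_drop _ _).symm
  have hdrop : (swapList m).drop k = (swapList m)[(k : ℕ)] :: (swapList m).drop (k + 1) :=
    List.drop_eq_getElem_cons hk
  rw [qcyc]
  conv_lhs => rw [hsplit]
  rw [List.prod_append, hdrop, List.prod_cons, swapList_getElem m k hk]
  have hfix1 : ((swapList m).drop ((k : ℕ) + 1)).prod k.castSucc = k.castSucc := by
    refine listProdApply _ _ fun σ hσ => ?_
    obtain ⟨i, hi, rfl⟩ := List.mem_iff_getElem.mp hσ
    rw [List.getElem_drop]
    have hlt : (k : ℕ) + 1 + i < (swapList m).length := by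
      have := hi; simp only [List.length_drop] at this; omega
    rw [swapList_getElem m _ hlt]
    refine Equiv.swap_apply_of_ne_of_ne ?_ ?_ <;>
      · refine Fin.ne_of_val_ne ?_
        simp only [Fin.castSucc_mk, Fin.succ_mk, Fin.coe_castSucc, Fin.val_succ]
        omega
  have hfix2 : ((swapList m).take (k : ℕ)).prod k.succ = k.succ := by
    refine listProdApply _ _ fun σ hσ => ?_
    obtain ⟨i, hi, rfl⟩ := List.mem_iff_getElem.mp hσ
    have hik : i < (k : ℕ) := by
      have := hi; simp only [List.length_take] at this; omega
    rw [List.getElem_take]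
    rw [swapList_getElem m _ (by rw [swapList_length]; omega)]
    refine Equiv.swap_apply_of_ne_of_ne ?_ ?_ <;>
      · refine Fin.ne_of_val_ne ?_
        simp only [Fin.castSucc_mk, Fin.succ_mk, Fin.coe_castSucc, Fin.val_succ]
        omega
  have hcast : Fin.castSucc ⟨(k : ℕ), by omega⟩ = k.castSucc := rfl
  have hsucc : Fin.succ ⟨(k : ℕ), by omega⟩ = k.succ := rfl
  rw [Equiv.Perm.mul_apply, Equiv.Perm.mul_apply, hfix1, hcast, hsucc,
    Equiv.swap_apply_left, hfix2]

theorem qcyc_last (m : ℕ) : qcyc m (Fin.last (m + 1)) = 0 := by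
  by_contra h
  obtain ⟨k, hk⟩ := Fin.exists_succ_eq.mpr h
  have := qcyc_castSucc k
  rw [hk] at this
  have h2 := (qcyc m).injective this
  have h3 := congrArg Fin.val h2
  simp only [Fin.coe_castSucc, Fin.val_last] at h3
  have := k.2
  omega

theorem pcyc_eq_inv (m : ℕ) : pcyc m = (qcyc m)⁻¹ := by
  refine listProdReverseInvol _ fun g hg => ?_
  rw [swapList] at hg
  obtain ⟨k, rfl⟩ := List.mem_ofFn.mp hg
  exact Equiv.swap_mul_self _ _

theorem pcyc_succ {m : ℕ} (k : Fin (m + 1)) : pcyc m k.succ = k.castSucc := by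
  rw [pcyc_eq_inv]
  exact (qcyc m).injective (by simp [qcyc_castSucc k])

theorem pcyc_zero (m : ℕ) : pcyc m 0 = Fin.last (m + 1) := by
  rw [pcyc_eq_inv]
  exact (qcyc m).injective (by simp [qcyc_last m])

theorem gmon_list_prod_val {r n : ℕ} (L : List (GMon r n)) :
    L.prod.1 = (L.map Subtype.val).prod := by
  induction L with
  | nil => rfl
  | cons a l ih => rw [List.prod_cons, GMon.mul_val, ih]; rfl

theorem mono_list_prod {n : ℕ} (L : List (Equiv.Perm (Fin n))) :
    (L.map fun σ => mono σ 1).prod = mono L.prod 1 := by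
  induction L with
  | nil => simp [List.prod_nil, ← mono_one]; rfl
  | cons a l ih =>
    rw [List.map_cons, List.prod_cons, List.prod_cons, ih, mono_mul]
    exact congrArg _ (funext fun j => one_mul _)

/-- The long cycle as an element of `G(r,1,n)`, `n = m+2`. -/
noncomputable def wcyc (r m : ℕ) : GMon r (m + 2) :=
  ((List.ofFn fun k : Fin (m + 1) => sW r k.castSucc k.succ).reverse).prod

theorem wcyc_val (r m : ℕ) : (wcyc r m).1 = mono (pcyc m) 1 := by
  rw [wcyc, gmon_list_prod_val]
  have : (List.map Subtype.val (List.ofFn fun k : Fin (m + 1) => sW r k.castSucc k.succ).reverse)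
      = ((swapList m).reverse.map fun σ => mono σ 1) := by
    erw [List.map_reverse, List.map_reverse, swapList, List.map_ofFn, List.map_ofFn]
    rfl
  rw [this, mono_list_prod]
  rw [pcyc]

theorem cPhiOp_eq : cPhiOp r κ c₀ c m =
    cX r (m + 2) κ c₀ c (Fin.last (m + 1)) * cT r (m + 2) κ c₀ c (wcyc r m) := by
  rw [cPhiOp, wcyc, ← cT_list_prod, List.map_reverse, List.map_ofFn]
  rfl


theorem cT_wcyc_cX (i : Fin (m + 2)) :
    cT r (m + 2) κ c₀ c (wcyc r m) * cX r (m + 2) κ c₀ c i =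
      cX r (m + 2) κ c₀ c (pcyc m i) * cT r (m + 2) κ c₀ c (wcyc r m) := by
  have h := cT_mul_cX r (m + 2) κ c₀ c (wcyc r m) (pcyc m) (fun _ => 1)
    (by rw [wcyc_val]; rfl) (fun _ => one_ne_zero) i
  simpa using h

theorem cT_wcyc_cY (i : Fin (m + 2)) :
    cT r (m + 2) κ c₀ c (wcyc r m) * cY r (m + 2) κ c₀ c i =
      cY r (m + 2) κ c₀ c (pcyc m i) * cT r (m + 2) κ c₀ c (wcyc r m) := by
  have h := cT_mul_cY r (m + 2) κ c₀ c (wcyc r m) (pcyc m) (fun _ => 1)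
    (by rw [wcyc_val]; rfl) i
  simpa using h

theorem cT_zetaW_cX_ne {i j : Fin n} (h : j ≠ i) (l : ℤ) :
    cT r n κ c₀ c (zetaW r i l) * cX r n κ c₀ c j =
      cX r n κ c₀ c j * cT r n κ c₀ c (zetaW r i l) := by
  have hh := cT_mul_cX r n κ c₀ c (zetaW r i l) 1
    (fun b => if b = i then zeta r ^ l else 1) (zetaW_eq_mono r i l) (aZ_ne_zero r i l) j
  rw [hh]
  simp [Equiv.Perm.one_apply, h]

theorem cT_zetaW_cX_self (i : Fin n) (l : ℤ) :
    cT r n κ c₀ c (zetaW r i l) * cX r n κ c₀ c i =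
      zeta r ^ (-l) • (cX r n κ c₀ c i * cT r n κ c₀ c (zetaW r i l)) := by
  have hh := cT_mul_cX r n κ c₀ c (zetaW r i l) 1
    (fun b => if b = i then zeta r ^ l else 1) (zetaW_eq_mono r i l) (aZ_ne_zero r i l) i
  rw [hh]
  have h1 : (1 : Equiv.Perm (Fin n)) i = i := rfl
  rw [h1, if_pos rfl, zeta_zpow_inv]

theorem cT_reflW_cX_self {i j : Fin n} (hij : i ≠ j) (l : ℤ) :
    cT r n κ c₀ c (reflW r i j l) * cX r n κ c₀ c i =
      zeta r ^ l • (cX r n κ c₀ c j * cT r n κ c₀ c (reflW r i j l)) := by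
  have hh := cT_mul_cX r n κ c₀ c (reflW r i j l) (Equiv.swap i j) (aRefl r i j l)
    (reflW_eq_mono r hij l) (aRefl_ne_zero r i j l) i
  rw [hh, Equiv.swap_apply_left]
  have : aRefl r i j l i = zeta r ^ (-l) := by simp [aRefl]
  rw [this, zeta_zpow_inv]
  simp

theorem cT_reflW_cX_other {i j b : Fin n} (hij : i ≠ j) (hbi : b ≠ i) (hbj : b ≠ j)
    (l : ℤ) :
    cT r n κ c₀ c (reflW r i j l) * cX r n κ c₀ c b =
      cX r n κ c₀ c b * cT r n κ c₀ c (reflW r i j l) := by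
  have hh := cT_mul_cX r n κ c₀ c (reflW r i j l) (Equiv.swap i j) (aRefl r i j l)
    (reflW_eq_mono r hij l) (aRefl_ne_zero r i j l) b
  rw [hh, Equiv.swap_apply_of_ne_of_ne hbi hbj]
  have : aRefl r i j l b = 1 := by simp [aRefl, hbi, hbj]
  rw [this]
  simp

theorem zetaW_mul_wcyc (j : Fin (m + 2)) (l : ℤ) :
    zetaW r (pcyc m j) l * wcyc r m = wcyc r m * zetaW r j l := by
  refine Subtype.ext ?_
  rw [GMon.mul_val, GMon.mul_val, wcyc_val, zetaW_eq_mono, zetaW_eq_mono,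
    mono_mul, mono_mul, one_mul, mul_one]
  refine congrArg _ (funext fun b => ?_)
  have : (pcyc m) b = (pcyc m) j ↔ b = j := (pcyc m).injective.eq_iff
  simp only [Pi.one_apply, one_mul, mul_one]
  by_cases hb : b = j
  · rw [if_pos (this.mpr hb), if_pos hb]
  · rw [if_neg (fun hh => hb (this.mp hh)), if_neg hb]

theorem stmt13_part3 (k : Fin (m + 1)) :
    cT r (m + 2) κ c₀ c (zetaW r k.castSucc 1) * cPhiOp r κ c₀ c m =
      cPhiOp r κ c₀ c m * cT r (m + 2) κ c₀ c (zetaW r k.succ 1) := by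
  rw [cPhiOp_eq, ← mul_assoc,
    cT_zetaW_cX_ne r (m + 2) κ c₀ c (Fin.ne_of_val_ne (by
      have := k.2
      simp only [Fin.val_last, Fin.coe_castSucc]
      omega)) 1,
    mul_assoc, ← cT_mul, ← (by rw [pcyc_succ] : zetaW r (pcyc m k.succ) 1 = zetaW r k.castSucc 1),
    zetaW_mul_wcyc, cT_mul, mul_assoc]

theorem stmt13_part4 :
    cT r (m + 2) κ c₀ c (zetaW r (Fin.last (m + 1)) 1) * cPhiOp r κ c₀ c m =
      (zeta r)⁻¹ • (cPhiOp r κ c₀ c m * cT r (m + 2) κ c₀ c (zetaW r 0 1)) := by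
  rw [cPhiOp_eq, ← mul_assoc, cT_zetaW_cX_self r (m + 2) κ c₀ c (Fin.last (m + 1)) 1,
    smul_mul_assoc, mul_assoc, ← cT_mul,
    ← (by rw [pcyc_zero] : zetaW r (pcyc m 0) 1 = zetaW r (Fin.last (m + 1)) 1),
    zetaW_mul_wcyc, cT_mul, ← mul_assoc]
  norm_num


theorem zeta_zpow_eq_one_iff {r : ℕ} (hr : 0 < r) (d : ℤ) :
    zeta r ^ d = 1 ↔ (r : ℤ) ∣ d := by
  have hzeta : zeta r ^ d = Complex.exp (d * (2 * Real.pi * Complex.I / r)) := by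
    rw [zeta, ← Complex.exp_int_mul]
  have hrC : (r : ℂ) ≠ 0 := Nat.cast_ne_zero.mpr hr.ne'
  have hpi : (2 * (Real.pi : ℂ) * Complex.I) ≠ 0 := by
    simp [Real.pi_ne_zero, Complex.I_ne_zero, Complex.ofReal_ne_zero]
  rw [hzeta, Complex.exp_eq_one_iff]
  constructor
  · rintro ⟨k, hk⟩
    refine ⟨k, ?_⟩
    have : (d : ℂ) = (r : ℂ) * k := by
      field_simp at hk
      have hk2 : (d : ℂ) * (2 * (Real.pi : ℂ) * Complex.I) =
          ((r : ℂ) * k) * (2 * (Real.pi : ℂ) * Complex.I) := by rw [hk]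
      exact mul_right_cancel₀ hpi hk2
    exact_mod_cast this
  · rintro ⟨k, rfl⟩
    refine ⟨k, ?_⟩
    push_cast
    field_simp

theorem zeta_geom_sum {r : ℕ} (hr : 0 < r) (d : ℤ) :
    ∑ j ∈ Finset.range r, zeta r ^ (d * (j : ℤ)) = if (r : ℤ) ∣ d then (r : ℂ) else 0 := by
  have hpow : ∀ j : ℕ, zeta r ^ (d * (j : ℤ)) = (zeta r ^ d) ^ j := by
    intro j
    rw [zpow_mul, zpow_natCast]
  simp only [hpow]
  by_cases h1 : (r : ℤ) ∣ d
  · rw [if_pos h1, (zeta_zpow_eq_one_iff hr d).mpr h1]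
    simp
  · rw [if_neg h1]
    have hne : zeta r ^ d ≠ 1 := fun hh => h1 ((zeta_zpow_eq_one_iff hr d).mp hh)
    rw [geom_sum_eq hne, zeta_zpow_root r d, sub_self, zero_div]

theorem int_dvd_small {r : ℕ} {a b : ℤ} (ha : 0 ≤ a) (ha2 : a < r) (hb : 0 ≤ b)
    (hb2 : b < r) (h : (r : ℤ) ∣ a - b) : a = b := by
  obtain ⟨t, ht⟩ := h
  have hr0 : (0 : ℤ) < r := by omega
  have h1 : t = 0 := by
    rcases lt_trichotomy t 0 with h' | h' | h'
    · nlinarith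
    · exact h'
    · nlinarith
  rw [h1, mul_zero] at ht
  omega


theorem eps_coeff (hr : 0 < r) (l' : ℕ) (hl' : l' < r) :
    ∑ j ∈ Finset.range r,
        (dpar r c ((j : ℤ) - 1) - dpar r c ((j : ℤ) - 2)) * zeta r ^ (-(l' : ℤ) * (j : ℤ)) =
      if 1 ≤ l' then c l' * (zeta r ^ (-(l' : ℤ)) - zeta r ^ (-2 * (l' : ℤ))) * r else 0 := by
  have step1 : ∀ j ∈ Finset.range r,
      (dpar r c ((j : ℤ) - 1) - dpar r c ((j : ℤ) - 2)) * zeta r ^ (-(l' : ℤ) * (j : ℤ)) =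
        ∑ l ∈ Finset.Ico 1 r, c l * (zeta r ^ (-(l : ℤ)) - zeta r ^ (-2 * (l : ℤ))) *
          zeta r ^ (((l : ℤ) - (l' : ℤ)) * (j : ℤ)) := by
    intro j _
    rw [dpar, dpar, ← Finset.sum_sub_distrib, Finset.sum_mul]
    refine Finset.sum_congr rfl fun l _ => ?_
    have h1 : zeta r ^ ((l : ℤ) * ((j : ℤ) - 1)) =
        zeta r ^ (-(l : ℤ)) * zeta r ^ (((l : ℤ) - (l' : ℤ)) * (j : ℤ)) *
          zeta r ^ ((l' : ℤ) * (j : ℤ)) := by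
      rw [← zeta_zpow_add, ← zeta_zpow_add]; congr 1; ring
    have h2 : zeta r ^ ((l : ℤ) * ((j : ℤ) - 2)) =
        zeta r ^ (-2 * (l : ℤ)) * zeta r ^ (((l : ℤ) - (l' : ℤ)) * (j : ℤ)) *
          zeta r ^ ((l' : ℤ) * (j : ℤ)) := by
      rw [← zeta_zpow_add, ← zeta_zpow_add]; congr 1; ring
    have h3 : zeta r ^ ((l' : ℤ) * (j : ℤ)) * zeta r ^ (-(l' : ℤ) * (j : ℤ)) = 1 := by
      rw [← zeta_zpow_add, show (l' : ℤ) * (j : ℤ) + -(l' : ℤ) * (j : ℤ) = 0 from by ring,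
        zpow_zero]
    rw [h1, h2]
    linear_combination (c l * (zeta r ^ (-(l : ℤ)) - zeta r ^ (-2 * (l : ℤ))) *
      zeta r ^ (((l : ℤ) - (l' : ℤ)) * (j : ℤ))) * h3
  rw [Finset.sum_congr rfl step1, Finset.sum_comm]
  have step2 : ∀ l ∈ Finset.Ico 1 r,
      ∑ j ∈ Finset.range r, c l * (zeta r ^ (-(l : ℤ)) - zeta r ^ (-2 * (l : ℤ))) *
          zeta r ^ (((l : ℤ) - (l' : ℤ)) * (j : ℤ)) =
        if l = l' then c l * (zeta r ^ (-(l : ℤ)) - zeta r ^ (-2 * (l : ℤ))) * r else 0 := by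
    intro l hl
    rw [← Finset.mul_sum, zeta_geom_sum hr ((l : ℤ) - (l' : ℤ))]
    obtain ⟨hl1, hl2⟩ := Finset.mem_Ico.mp hl
    by_cases he : l = l'
    · subst he
      rw [if_pos rfl, if_pos (by rw [sub_self]; exact dvd_zero _)]
    · rw [if_neg he, if_neg, mul_zero]
      intro hdvd
      refine he ?_
      have := int_dvd_small (r := r) (by positivity) (by exact_mod_cast hl2)
        (by positivity) (by exact_mod_cast hl') hdvd
      exact_mod_cast this
  rw [Finset.sum_congr rfl step2, Finset.sum_ite_eq' (Finset.Ico 1 r) l'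
    (fun l => c l * (zeta r ^ (-(l : ℤ)) - zeta r ^ (-2 * (l : ℤ))) * r)]
  by_cases h : 1 ≤ l'
  · rw [if_pos (Finset.mem_Ico.mpr ⟨h, hl'⟩), if_pos h]
  · rw [if_neg (fun hh => h (Finset.mem_Ico.mp hh).1), if_neg h]

theorem eps_sum (hr : 1 ≤ r) (i0 : Fin n) :
    ∑ j ∈ Finset.range r, (dpar r c ((j : ℤ) - 1) - dpar r c ((j : ℤ) - 2)) •
        cEps r n κ c₀ c i0 (j : ℤ) =
      ∑ l ∈ Finset.Ico 1 r, (c l * (zeta r ^ (-(l : ℤ)) - zeta r ^ (-2 * (l : ℤ)))) •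
        cT r n κ c₀ c (zetaW r i0 (l : ℤ)) := by
  have hr0 : 0 < r := hr
  have hrC : (r : ℂ) ≠ 0 := Nat.cast_ne_zero.mpr hr0.ne'
  calc
    ∑ j ∈ Finset.range r, (dpar r c ((j : ℤ) - 1) - dpar r c ((j : ℤ) - 2)) •
        cEps r n κ c₀ c i0 (j : ℤ)
      = ∑ j ∈ Finset.range r, ∑ l' ∈ Finset.range r,
          ((r : ℂ)⁻¹ * ((dpar r c ((j : ℤ) - 1) - dpar r c ((j : ℤ) - 2)) *
            zeta r ^ (-(l' : ℤ) * (j : ℤ)))) • cT r n κ c₀ c (zetaW r i0 (l' : ℤ)) := by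
        refine Finset.sum_congr rfl fun j _ => ?_
        rw [cEps, Finset.smul_sum, Finset.smul_sum]
        refine Finset.sum_congr rfl fun l' _ => ?_
        rw [smul_smul, smul_smul]
        congr 1
        ring
    _ = ∑ l' ∈ Finset.range r,
          ((r : ℂ)⁻¹ * ∑ j ∈ Finset.range r, (dpar r c ((j : ℤ) - 1) - dpar r c ((j : ℤ) - 2)) *
            zeta r ^ (-(l' : ℤ) * (j : ℤ))) • cT r n κ c₀ c (zetaW r i0 (l' : ℤ)) := by
        rw [Finset.sum_comm]
        refine Finset.sum_congr rfl fun l' _ => ?_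
        rw [Finset.mul_sum, ← Finset.sum_smul]
    _ = ∑ l' ∈ Finset.range r,
          (if 1 ≤ l' then c l' * (zeta r ^ (-(l' : ℤ)) - zeta r ^ (-2 * (l' : ℤ))) else 0) •
            cT r n κ c₀ c (zetaW r i0 (l' : ℤ)) := by
        refine Finset.sum_congr rfl fun l' hl' => ?_
        rw [eps_coeff r c hr0 l' (Finset.mem_range.mp hl')]
        congr 1
        by_cases h : 1 ≤ l'
        · rw [if_pos h, if_pos h]
          field_simp
        · rw [if_neg h, if_neg h, mul_zero]
    _ = ∑ l' ∈ Finset.Ico 1 r,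
          (c l' * (zeta r ^ (-(l' : ℤ)) - zeta r ^ (-2 * (l' : ℤ)))) •
            cT r n κ c₀ c (zetaW r i0 (l' : ℤ)) := by
        rw [← Finset.sum_subset (fun x hx => Finset.mem_range.mpr (Finset.mem_Ico.mp hx).2)
          (fun x _ hx => ?_)]
        · refine Finset.sum_congr rfl fun l' hl' => ?_
          rw [if_pos (Finset.mem_Ico.mp hl').1]
        · rw [if_neg (fun hh => hx (Finset.mem_Ico.mpr ⟨hh, Finset.mem_range.mp ‹_›⟩)),
            zero_smul]


theorem cz_cX_last {i : Fin (m + 2)} (hiN : i ≠ Fin.last (m + 1)) :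
    cz r (m + 2) κ c₀ c i * cX r (m + 2) κ c₀ c (Fin.last (m + 1)) =
      cX r (m + 2) κ c₀ c (Fin.last (m + 1)) *
        (cz r (m + 2) κ c₀ c i + c₀ • ∑ l ∈ Finset.range r,
          cT r (m + 2) κ c₀ c (reflW r i (Fin.last (m + 1)) (l : ℤ))) := by
  have hiv : (i : ℕ) ≠ m + 1 := fun h => hiN (Fin.ext h)
  have key1 : cY r (m + 2) κ c₀ c i * cX r (m + 2) κ c₀ c i *
      cX r (m + 2) κ c₀ c (Fin.last (m + 1)) =
      cX r (m + 2) κ c₀ c (Fin.last (m + 1)) *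
        (cY r (m + 2) κ c₀ c i * cX r (m + 2) κ c₀ c i) +
      c₀ • ∑ l ∈ Finset.range r, cX r (m + 2) κ c₀ c (Fin.last (m + 1)) *
        cT r (m + 2) κ c₀ c (reflW r i (Fin.last (m + 1)) (l : ℤ)) := by
    have e1 : cY r (m + 2) κ c₀ c i * cX r (m + 2) κ c₀ c i *
        cX r (m + 2) κ c₀ c (Fin.last (m + 1)) =
        (cY r (m + 2) κ c₀ c i * cX r (m + 2) κ c₀ c (Fin.last (m + 1))) *
          cX r (m + 2) κ c₀ c i := by
      rw [mul_assoc, cX_comm, ← mul_assoc]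
    rw [e1, cY_cX_ne r (m + 2) κ c₀ c hiN, add_mul, mul_assoc, smul_mul_assoc,
      Finset.sum_mul]
    congr 2
    refine Finset.sum_congr rfl fun l _ => ?_
    rw [smul_mul_assoc, cT_reflW_cX_self r (m + 2) κ c₀ c hiN (l : ℤ), smul_smul,
      mul_comm (zeta r ^ (-(l : ℤ))), zeta_zpow_neg_mul, one_smul]
  have key2 : cPhi r (m + 2) κ c₀ c i * cX r (m + 2) κ c₀ c (Fin.last (m + 1)) =
      cX r (m + 2) κ c₀ c (Fin.last (m + 1)) * cPhi r (m + 2) κ c₀ c i := by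
    rw [cPhi, Finset.sum_mul, Finset.mul_sum]
    refine Finset.sum_congr rfl fun j hj => ?_
    have hj' : j < i := (Finset.mem_filter.mp hj).2
    have hij : i ≠ j := (ne_of_lt hj').symm
    have hNj : Fin.last (m + 1) ≠ j := by
      refine Fin.ne_of_val_ne ?_
      have := hj'
      rw [Fin.lt_def] at this
      have hi2 := i.2
      simp only [Fin.val_last]
      omega
    rw [Finset.sum_mul, Finset.mul_sum]
    exact Finset.sum_congr rfl fun l _ =>
      cT_reflW_cX_other r (m + 2) κ c₀ c hij hiN.symm hNj (l : ℤ)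
  rw [cz, add_mul, smul_mul_assoc, key1, key2]
  rw [mul_add, mul_add, mul_smul_comm, mul_smul_comm, Finset.mul_sum]
  abel

theorem wcyc_mul_reflW {a b : Fin (m + 2)} (hab : a ≠ b) (l : ℤ) :
    reflW r (pcyc m a) (pcyc m b) l * wcyc r m = wcyc r m * reflW r a b l := by
  have hpab : pcyc m a ≠ pcyc m b := fun h => hab ((pcyc m).injective h)
  refine Subtype.ext ?_
  rw [GMon.mul_val, GMon.mul_val, wcyc_val, reflW_eq_mono r hpab l, reflW_eq_mono r hab l,
    mono_mul, mono_mul]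
  have hperm : Equiv.swap (pcyc m a) (pcyc m b) * pcyc m = pcyc m * Equiv.swap a b := by
    rw [Equiv.swap_apply_apply]
    group
  rw [hperm]
  refine congrArg _ (funext fun x => ?_)
  simp only [Pi.one_apply, one_mul, mul_one]
  rw [aRefl, aRefl]
  by_cases hx : x = a
  · rw [if_pos (by rw [hx]), if_pos hx]
  · rw [if_neg (fun hh => hx ((pcyc m).injective hh)), if_neg hx]
    by_cases hx2 : x = b
    · rw [if_pos (by rw [hx2]), if_pos hx2]
    · rw [if_neg (fun hh => hx2 ((pcyc m).injective hh)), if_neg hx2]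

theorem cT_wcyc_cT_refl {a b : Fin (m + 2)} (hab : a ≠ b) (l : ℤ) :
    cT r (m + 2) κ c₀ c (wcyc r m) * cT r (m + 2) κ c₀ c (reflW r a b l) =
      cT r (m + 2) κ c₀ c (reflW r (pcyc m a) (pcyc m b) l) *
        cT r (m + 2) κ c₀ c (wcyc r m) := by
  rw [← cT_mul, ← cT_mul, ← wcyc_mul_reflW r m hab l]

theorem pcyc_filter_image (k : Fin (m + 1)) :
    (Finset.univ.filter (fun j : Fin (m + 2) => j < k.succ)).image (pcyc m) =
      insert (Fin.last (m + 1))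
        (Finset.univ.filter (fun j : Fin (m + 2) => j < k.castSucc)) := by
  ext j'
  simp only [Finset.mem_image, Finset.mem_insert, Finset.mem_filter, Finset.mem_univ, true_and]
  constructor
  · rintro ⟨j, hj, rfl⟩
    rcases Fin.eq_zero_or_eq_succ j with rfl | ⟨t, rfl⟩
    · left; exact pcyc_zero m
    · right
      rw [pcyc_succ]
      rw [Fin.lt_def] at hj ⊢
      simp only [Fin.val_succ] at hj
      simp only [Fin.coe_castSucc]
      omega
  · rintro (rfl | hj')
    · exact ⟨0, by rw [Fin.lt_def]; simp, pcyc_zero m⟩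
    · rw [Fin.lt_def] at hj'
      simp only [Fin.coe_castSucc] at hj'
      have hj2 : (j' : ℕ) < m + 1 := by have := k.2; omega
      refine ⟨(⟨(j' : ℕ), hj2⟩ : Fin (m + 1)).succ, ?_, ?_⟩
      · rw [Fin.lt_def]
        simp only [Fin.val_succ]
        omega
      · rw [pcyc_succ]
        exact Fin.ext rfl

theorem cT_wcyc_cPhi (k : Fin (m + 1)) :
    cT r (m + 2) κ c₀ c (wcyc r m) * cPhi r (m + 2) κ c₀ c k.succ =
      ((∑ l ∈ Finset.range r,
          cT r (m + 2) κ c₀ c (reflW r k.castSucc (Fin.last (m + 1)) (l : ℤ))) +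
        cPhi r (m + 2) κ c₀ c k.castSucc) * cT r (m + 2) κ c₀ c (wcyc r m) := by
  rw [cPhi, Finset.mul_sum]
  have step : ∀ j ∈ Finset.univ.filter (fun j : Fin (m + 2) => j < k.succ),
      cT r (m + 2) κ c₀ c (wcyc r m) * ∑ l ∈ Finset.range r,
          cT r (m + 2) κ c₀ c (reflW r k.succ j (l : ℤ)) =
        (∑ l ∈ Finset.range r,
          cT r (m + 2) κ c₀ c (reflW r k.castSucc (pcyc m j) (l : ℤ))) *
          cT r (m + 2) κ c₀ c (wcyc r m) := by
    intro j hj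
    have hj' : j < k.succ := (Finset.mem_filter.mp hj).2
    have hkj : k.succ ≠ j := (ne_of_lt hj').symm
    rw [Finset.mul_sum, Finset.sum_mul]
    refine Finset.sum_congr rfl fun l _ => ?_
    rw [cT_wcyc_cT_refl r κ c₀ c m hkj (l : ℤ), pcyc_succ]
  rw [Finset.sum_congr rfl step, ← Finset.sum_mul]
  congr 1
  rw [← Finset.sum_image (g := pcyc m) (f := fun j' => ∑ l ∈ Finset.range r,
      cT r (m + 2) κ c₀ c (reflW r k.castSucc j' (l : ℤ)))
    (fun x _ y _ h => (pcyc m).injective h), pcyc_filter_image,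
    Finset.sum_insert (by
      simp only [Finset.mem_filter, Finset.mem_univ, true_and]
      rw [Fin.lt_def]
      simp only [Fin.val_last, Fin.coe_castSucc]
      have := k.2
      omega), cPhi]

theorem cT_wcyc_cz (k : Fin (m + 1)) :
    cT r (m + 2) κ c₀ c (wcyc r m) * cz r (m + 2) κ c₀ c k.succ =
      (cz r (m + 2) κ c₀ c k.castSucc + c₀ • ∑ l ∈ Finset.range r,
          cT r (m + 2) κ c₀ c (reflW r k.castSucc (Fin.last (m + 1)) (l : ℤ))) *
        cT r (m + 2) κ c₀ c (wcyc r m) := by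
  have hyx : cT r (m + 2) κ c₀ c (wcyc r m) *
      (cY r (m + 2) κ c₀ c k.succ * cX r (m + 2) κ c₀ c k.succ) =
      (cY r (m + 2) κ c₀ c k.castSucc * cX r (m + 2) κ c₀ c k.castSucc) *
        cT r (m + 2) κ c₀ c (wcyc r m) := by
    rw [← mul_assoc, cT_wcyc_cY, pcyc_succ, mul_assoc, cT_wcyc_cX, pcyc_succ, ← mul_assoc]
  rw [cz, mul_add, mul_smul_comm, hyx, cT_wcyc_cPhi, cz]
  rw [add_mul, smul_add, add_mul, add_mul, smul_mul_assoc, smul_mul_assoc]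
  abel

theorem stmt13_part1 (k : Fin (m + 1)) :
    cz r (m + 2) κ c₀ c k.castSucc * cPhiOp r κ c₀ c m =
      cPhiOp r κ c₀ c m * cz r (m + 2) κ c₀ c k.succ := by
  have hne : k.castSucc ≠ Fin.last (m + 1) := by
    refine Fin.ne_of_val_ne ?_
    simp only [Fin.coe_castSucc, Fin.val_last]
    have := k.2
    omega
  rw [cPhiOp_eq, ← mul_assoc, cz_cX_last r κ c₀ c m hne, mul_assoc, ← cT_wcyc_cz,
    ← mul_assoc]


theorem filter_lt_last :
    (Finset.univ.filter (fun j : Fin (m + 2) => j < Fin.last (m + 1))) =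
      Finset.univ.erase (Fin.last (m + 1)) := by
  ext j
  simp only [Finset.mem_filter, Finset.mem_univ, true_and, Finset.mem_erase, and_true]
  rw [Fin.lt_def]
  simp only [Fin.val_last]
  constructor
  · intro h hjN
    rw [hjN] at h
    simp at h
  · intro h
    have hv : (j : ℕ) ≠ m + 1 := fun hh => h (Fin.ext hh)
    have := j.2
    omega

theorem cz_last_cX :
    cz r (m + 2) κ c₀ c (Fin.last (m + 1)) * cX r (m + 2) κ c₀ c (Fin.last (m + 1)) =
      cX r (m + 2) κ c₀ c (Fin.last (m + 1)) *
        (cY r (m + 2) κ c₀ c (Fin.last (m + 1)) * cX r (m + 2) κ c₀ c (Fin.last (m + 1)) +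
          κ • 1 - ∑ l ∈ Finset.Ico 1 r,
            (c l * (zeta r ^ (-(l : ℤ)) - zeta r ^ (-2 * (l : ℤ)))) •
              cT r (m + 2) κ c₀ c (zetaW r (Fin.last (m + 1)) (l : ℤ))) := by
  have hzz : ∀ l : ℕ, (c l * (1 - zeta r ^ (-(l : ℤ)))) * zeta r ^ (-(l : ℤ)) =
      c l * (zeta r ^ (-(l : ℤ)) - zeta r ^ (-2 * (l : ℤ))) := by
    intro l
    have h2 : zeta r ^ (-(l : ℤ)) * zeta r ^ (-(l : ℤ)) = zeta r ^ (-2 * (l : ℤ)) := by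
      rw [← zeta_zpow_add]; congr 1; ring
    linear_combination (-(c l)) * h2
  rw [cz, add_mul, smul_mul_assoc, cPhi, filter_lt_last]
  conv_lhs => rw [cY_cX_eq r (m + 2) κ c₀ c (Fin.last (m + 1))]
  rw [sub_mul, sub_mul, add_mul, smul_mul_assoc, smul_mul_assoc, one_mul, Finset.sum_mul]
  have hl : ∀ l ∈ Finset.Ico 1 r,
      ((c l * (1 - zeta r ^ (-(l : ℤ)))) • cT r (m + 2) κ c₀ c
        (zetaW r (Fin.last (m + 1)) (l : ℤ))) * cX r (m + 2) κ c₀ c (Fin.last (m + 1)) =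
      (c l * (zeta r ^ (-(l : ℤ)) - zeta r ^ (-2 * (l : ℤ)))) •
        (cX r (m + 2) κ c₀ c (Fin.last (m + 1)) * cT r (m + 2) κ c₀ c
          (zetaW r (Fin.last (m + 1)) (l : ℤ))) := by
    intro l _
    rw [smul_mul_assoc, cT_zetaW_cX_self r (m + 2) κ c₀ c (Fin.last (m + 1)) (l : ℤ),
      smul_smul, hzz l]
  rw [Finset.sum_congr rfl hl]
  rw [mul_sub, mul_add, mul_smul_comm, mul_one, Finset.mul_sum]
  simp only [mul_smul_comm, ← mul_assoc]
  abel

theorem cPhi_zero_eq : cPhi r (m + 2) κ c₀ c 0 = 0 := by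
  rw [cPhi]
  rw [Finset.filter_false_of_mem (fun j _ => by rw [Fin.lt_def]; simp)]
  exact Finset.sum_empty

theorem cT_wcyc_last_block :
    cT r (m + 2) κ c₀ c (wcyc r m) * (cz r (m + 2) κ c₀ c 0 + κ • 1 -
        ∑ l ∈ Finset.Ico 1 r,
          (c l * (zeta r ^ (-(l : ℤ)) - zeta r ^ (-2 * (l : ℤ)))) •
            cT r (m + 2) κ c₀ c (zetaW r 0 (l : ℤ))) =
      (cY r (m + 2) κ c₀ c (Fin.last (m + 1)) * cX r (m + 2) κ c₀ c (Fin.last (m + 1)) +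
          κ • 1 - ∑ l ∈ Finset.Ico 1 r,
            (c l * (zeta r ^ (-(l : ℤ)) - zeta r ^ (-2 * (l : ℤ)))) •
              cT r (m + 2) κ c₀ c (zetaW r (Fin.last (m + 1)) (l : ℤ))) *
        cT r (m + 2) κ c₀ c (wcyc r m) := by
  have hyx : cT r (m + 2) κ c₀ c (wcyc r m) *
      (cY r (m + 2) κ c₀ c 0 * cX r (m + 2) κ c₀ c 0) =
      (cY r (m + 2) κ c₀ c (Fin.last (m + 1)) * cX r (m + 2) κ c₀ c (Fin.last (m + 1))) *
        cT r (m + 2) κ c₀ c (wcyc r m) := by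
    rw [← mul_assoc, cT_wcyc_cY, pcyc_zero, mul_assoc, cT_wcyc_cX, pcyc_zero, ← mul_assoc]
  have hz : ∀ l : ℕ, cT r (m + 2) κ c₀ c (wcyc r m) * cT r (m + 2) κ c₀ c (zetaW r 0 (l : ℤ)) =
      cT r (m + 2) κ c₀ c (zetaW r (Fin.last (m + 1)) (l : ℤ)) *
        cT r (m + 2) κ c₀ c (wcyc r m) := by
    intro l
    rw [← cT_mul, ← cT_mul, ← zetaW_mul_wcyc r m 0 (l : ℤ), pcyc_zero]
  rw [cz, cPhi_zero_eq, smul_zero, add_zero]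
  rw [mul_sub, mul_add, hyx, mul_smul_comm, mul_one, Finset.mul_sum]
  rw [sub_mul, add_mul, smul_mul_assoc, one_mul, Finset.sum_mul]
  congr 1
  refine Finset.sum_congr rfl fun l _ => ?_
  rw [mul_smul_comm, hz l, smul_mul_assoc]

theorem stmt13_part2 (hr : 1 ≤ r) :
    cz r (m + 2) κ c₀ c (Fin.last (m + 1)) * cPhiOp r κ c₀ c m =
      cPhiOp r κ c₀ c m *
        (cz r (m + 2) κ c₀ c 0 + κ • 1 -
          ∑ j ∈ Finset.range r,
            (dpar r c ((j : ℤ) - 1) - dpar r c ((j : ℤ) - 2)) •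
              cEps r (m + 2) κ c₀ c 0 (j : ℤ)) := by
  rw [cPhiOp_eq, ← mul_assoc, cz_last_cX, mul_assoc, ← cT_wcyc_last_block, ← mul_assoc,
    mul_assoc (cX r (m + 2) κ c₀ c (Fin.last (m + 1))) (cT r (m + 2) κ c₀ c (wcyc r m)),
    eps_sum r (m + 2) κ c₀ c hr 0, ← mul_assoc]

/-- The intertwining relations of `Φ`: `z_i Φ = Φ z_{i+1}`,
`z_n Φ = Φ (z_1 + κ - Σ_j (d_{j-1} - d_{j-2}) ε_{1j})`, `t_{ζ_i} Φ = Φ t_{ζ_{i+1}}`,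
and `t_{ζ_n} Φ = ζ⁻¹ Φ t_{ζ_1}`. -/
theorem stmt13 (hr : 1 ≤ r) :
    (∀ k : Fin (m + 1),
      cz r (m + 2) κ c₀ c k.castSucc * cPhiOp r κ c₀ c m =
        cPhiOp r κ c₀ c m * cz r (m + 2) κ c₀ c k.succ)
    ∧ (cz r (m + 2) κ c₀ c (Fin.last (m + 1)) * cPhiOp r κ c₀ c m =
        cPhiOp r κ c₀ c m *
          (cz r (m + 2) κ c₀ c 0 + κ • 1 -
            ∑ j ∈ Finset.range r,
              (dpar r c ((j : ℤ) - 1) - dpar r c ((j : ℤ) - 2)) •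
                cEps r (m + 2) κ c₀ c 0 (j : ℤ)))
    ∧ (∀ k : Fin (m + 1),
      cT r (m + 2) κ c₀ c (zetaW r k.castSucc 1) * cPhiOp r κ c₀ c m =
        cPhiOp r κ c₀ c m * cT r (m + 2) κ c₀ c (zetaW r k.succ 1))
    ∧ (cT r (m + 2) κ c₀ c (zetaW r (Fin.last (m + 1)) 1) * cPhiOp r κ c₀ c m =
        (zeta r)⁻¹ • (cPhiOp r κ c₀ c m * cT r (m + 2) κ c₀ c (zetaW r 0 1))) := by
  exact ⟨stmt13_part1 r κ c₀ c m, stmt13_part2 r κ c₀ c m hr, stmt13_part3 r κ c₀ c m,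
    stmt13_part4 r κ c₀ c m⟩
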